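/- Let H be a group with finite symmetric generating set S whose word metric is δ-hyperbolic. For any A ≥ 0 there exists a constant κ ≥ 0, depending only on A, H, S and δ, such that every h ∈ H satisfying (1, h²)_h ≤ A (equivalently 2|h| − |h²| ≤ 2A) is κ-almost conjugacy minimal. -/
import Mathlib


open Set

/-- The word length of `h` with respect to the generating set `S`: the least `n` such
that `h` is a product of `n` elements of `S`. -/
noncomputable def wordLength {H : Type*} [Group H] (S : Set H) (h : H) : ℕ :=
  sInf {n | ∃ l : List H, l.length = n ∧ (∀ x ∈ l, x ∈ S) ∧ l.prod = h}

/-- The word metric: `d(a,b) = |a⁻¹ b|`. -/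
noncomputable def wordDist {H : Type*} [Group H] (S : Set H) (a b : H) : ℕ :=
  wordLength S (a⁻¹ * b)

/-- `g : {0,…,n} → H` is a discrete geodesic (of length `n`) in the word metric:
`d(g i, g j) = |i − j|` for all `i, j ≤ n`. -/
def IsDiscreteGeodesic {H : Type*} [Group H] (S : Set H) (g : ℕ → H) (n : ℕ) : Prop :=
  ∀ i j : ℕ, i ≤ j → j ≤ n → wordDist S (g i) (g j) = j - i

/-- The Gromov product `(x,y)_z = ½(d(x,z) + d(y,z) − d(x,y))` in the word metric. -/
noncomputable def gromovProd {H : Type*} [Group H] (S : Set H) (x y z : H) : ℝ :=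
  ((wordDist S x z : ℝ) + (wordDist S y z : ℝ) - (wordDist S x y : ℝ)) / 2

/-- The word metric of `(H,S)` is `δ`-hyperbolic: geodesic triangles in the Cayley graph
are `δ`-thin, i.e. for any `x, y, z`, any discrete geodesics `f` from `z` to `x` and `g`
from `z` to `y`, and any `i` with `i ≤ (x,y)_z`, one has `d(f i, g i) ≤ δ`. -/
def WordHyperbolic {H : Type*} [Group H] (S : Set H) (δ : ℝ) : Prop :=
  ∀ (x y z : H) (f g : ℕ → H),
    f 0 = z → f (wordDist S z x) = x → IsDiscreteGeodesic S f (wordDist S z x) →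
    g 0 = z → g (wordDist S z y) = y → IsDiscreteGeodesic S g (wordDist S z y) →
    ∀ i : ℕ, i ≤ wordDist S z x → i ≤ wordDist S z y →
      (i : ℝ) ≤ gromovProd S x y z →
      (wordDist S (f i) (g i) : ℝ) ≤ δ

/-- `h` is `κ`-almost conjugacy minimal: `|h| ≤ |h'| + κ` for every conjugate `h'` of
`h` in `H`. -/
def AlmostConjMin {H : Type*} [Group H] (S : Set H) (κ : ℝ) (h : H) : Prop :=
  ∀ g : H, (wordLength S h : ℝ) ≤ (wordLength S (g⁻¹ * h * g) : ℝ) + κ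

/-- `h` is conjugacy minimal: `|h| ≤ |h'|` for every conjugate `h'` of `h` in `H`. -/
def ConjMin {H : Type*} [Group H] (S : Set H) (h : H) : Prop :=
  ∀ g : H, wordLength S h ≤ wordLength S (g⁻¹ * h * g)


section Aux
variable {H : Type*} [Group H] {S : Set H}

lemma word_exists (hSsym : ∀ s ∈ S, s⁻¹ ∈ S) (hSgen : Subgroup.closure S = ⊤) (h : H) :
    ∃ l : List H, (∀ x ∈ l, x ∈ S) ∧ l.prod = h := by
  have h1 : h ∈ (Subgroup.closure S).toSubmonoid := by rw [hSgen]; trivial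
  rw [Subgroup.closure_toSubmonoid] at h1
  have hU : S ∪ S⁻¹ = S := by
    apply Set.union_eq_self_of_subset_right
    intro x hx
    simpa using hSsym x⁻¹ hx
  rw [hU] at h1
  exact Submonoid.exists_list_of_mem_closure h1

lemma wordLength_le {l : List H} (hl : ∀ x ∈ l, x ∈ S) :
    wordLength S l.prod ≤ l.length :=
  Nat.sInf_le ⟨l, rfl, hl, rfl⟩

lemma wordLength_spec (hSsym : ∀ s ∈ S, s⁻¹ ∈ S) (hSgen : Subgroup.closure S = ⊤) (h : H) :
    ∃ l : List H, l.length = wordLength S h ∧ (∀ x ∈ l, x ∈ S) ∧ l.prod = h := by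
  obtain ⟨l, hl, hp⟩ := word_exists hSsym hSgen h
  have := Nat.sInf_mem (s := {n | ∃ l : List H, l.length = n ∧ (∀ x ∈ l, x ∈ S) ∧ l.prod = h}) ⟨l.length, l, rfl, hl, hp⟩
  exact this
end Aux

section Aux2
variable {H : Type*} [Group H] {S : Set H}
variable (hSsym : ∀ s ∈ S, s⁻¹ ∈ S) (hSgen : Subgroup.closure S = ⊤)
include hSsym hSgen

lemma wordLength_one' : wordLength S (1 : H) = 0 :=
  Nat.le_zero.mp (wordLength_le (l := []) (by simp))

lemma wordLength_mul_le (a b : H) :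
    wordLength S (a * b) ≤ wordLength S a + wordLength S b := by
  obtain ⟨la, hla, hlaS, hlap⟩ := wordLength_spec hSsym hSgen a
  obtain ⟨lb, hlb, hlbS, hlbp⟩ := wordLength_spec hSsym hSgen b
  have := wordLength_le (S := S) (l := la ++ lb) (by
    intro x hx; rcases List.mem_append.mp hx with h | h
    · exact hlaS x h
    · exact hlbS x h)
  simpa [hla, hlb, hlap, hlbp] using this

lemma wordLength_inv_le (a : H) : wordLength S a⁻¹ ≤ wordLength S a := by
  obtain ⟨la, hla, hlaS, hlap⟩ := wordLength_spec hSsym hSgen a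
  have := wordLength_le (S := S) (l := (la.map (fun x => x⁻¹)).reverse) (by
    intro x hx
    simp only [List.mem_reverse, List.mem_map] at hx
    obtain ⟨y, hy, rfl⟩ := hx
    exact hSsym y (hlaS y hy))
  rw [List.prod_reverse_noncomm] at this
  simpa [hla, hlap] using this

lemma wordLength_inv (a : H) : wordLength S a⁻¹ = wordLength S a :=
  le_antisymm (wordLength_inv_le hSsym hSgen a)
    (by simpa using wordLength_inv_le hSsym hSgen a⁻¹)

lemma wordDist_symm (a b : H) : wordDist S a b = wordDist S b a := by
  unfold wordDist
  rw [← wordLength_inv hSsym hSgen]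
  simp [mul_inv_rev]

lemma wordDist_triangle (a b c : H) :
    wordDist S a c ≤ wordDist S a b + wordDist S b c := by
  have := wordLength_mul_le hSsym hSgen (a⁻¹ * b) (b⁻¹ * c)
  simpa [wordDist, mul_assoc] using this

end Aux2

section Aux3
variable {H : Type*} [Group H] {S : Set H}

lemma wordDist_left (g a b : H) : wordDist S (g * a) (g * b) = wordDist S a b := by
  simp [wordDist, mul_assoc]

lemma wordDist_one_left (a : H) : wordDist S 1 a = wordLength S a := by
  simp [wordDist]

lemma gromovProd_left (g x y z : H) :
    gromovProd S (g * x) (g * y) (g * z) = gromovProd S x y z := by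
  simp [gromovProd, wordDist_left]

end Aux3

section Aux4
variable {H : Type*} [Group H] {S : Set H}
variable (hSsym : ∀ s ∈ S, s⁻¹ ∈ S) (hSgen : Subgroup.closure S = ⊤)
include hSsym hSgen

lemma gromovProd_nonneg (x y z : H) : 0 ≤ gromovProd S x y z := by
  have h1 := wordDist_triangle hSsym hSgen x z y
  have h2 : wordDist S z y = wordDist S y z := wordDist_symm hSsym hSgen z y
  unfold gromovProd
  have : (wordDist S x y : ℝ) ≤ (wordDist S x z : ℝ) + (wordDist S y z : ℝ) := by
    rw [h2] at h1; exact_mod_cast h1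
  linarith

lemma gromovProd_le (x y z : H) : gromovProd S x y z ≤ (wordDist S x z : ℝ) := by
  have h1 := wordDist_triangle hSsym hSgen y x z
  have h2 : wordDist S y x = wordDist S x y := wordDist_symm hSsym hSgen y x
  rw [h2] at h1
  unfold gromovProd
  have : (wordDist S y z : ℝ) ≤ (wordDist S x y : ℝ) + (wordDist S x z : ℝ) := by
    exact_mod_cast h1
  linarith

lemma gromovProd_symm (x y z : H) : gromovProd S x y z = gromovProd S y x z := by
  unfold gromovProd
  rw [wordDist_symm hSsym hSgen x y]
  ring

lemma gromovProd_add (x y z : H) :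
    gromovProd S x y z + gromovProd S x z y = (wordDist S y z : ℝ) := by
  unfold gromovProd
  rw [wordDist_symm hSsym hSgen x z, wordDist_symm hSsym hSgen z y]
  ring

lemma exists_geodesic (z x : H) :
    ∃ f : ℕ → H, f 0 = z ∧ f (wordDist S z x) = x ∧
      IsDiscreteGeodesic S f (wordDist S z x) := by
  obtain ⟨l, hlen, hlS, hlp⟩ := wordLength_spec hSsym hSgen (z⁻¹ * x)
  have hlen' : l.length = wordDist S z x := hlen
  refine ⟨fun i => z * (l.take i).prod, by simp, ?_, ?_⟩
  · show z * (l.take (wordDist S z x)).prod = x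
    rw [← hlen', List.take_length, hlp, mul_inv_cancel_left]
  · -- geodesic property
    have hub : ∀ i j : ℕ, i ≤ j → j ≤ wordDist S z x →
        wordDist S (z * (l.take i).prod) (z * (l.take j).prod) ≤ j - i := by
      intro i j hij hj
      rw [wordDist_left]
      have hsplit : (l.take j).take i ++ (l.take j).drop i = l.take j :=
        List.take_append_drop i (l.take j)
      have htt : (l.take j).take i = l.take i := by
        rw [List.take_take, Nat.min_eq_left hij]
      have hprod : (l.take i).prod⁻¹ * (l.take j).prod = ((l.take j).drop i).prod := by
        have hkey : (l.take i).prod * ((l.take j).drop i).prod = (l.take j).prod := by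
          rw [← htt, ← List.prod_append, hsplit]
        rw [← hkey, inv_mul_cancel_left]
      show wordLength S ((l.take i).prod⁻¹ * (l.take j).prod) ≤ j - i
      rw [hprod]
      have hle := wordLength_le (S := S) (l := (l.take j).drop i) (by
        intro y hy
        exact hlS y (List.mem_of_mem_take (List.mem_of_mem_drop hy)))
      refine hle.trans (le_of_eq ?_)
      have hjl : j ≤ l.length := by omega
      simp only [List.length_drop, List.length_take]
      omega
    intro i j hij hj
    show wordDist S (z * (l.take i).prod) (z * (l.take j).prod) = j - i
    have h1 := hub i j hij hj
    have h2 := hub 0 i (Nat.zero_le i) (le_trans hij hj)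
    have h3 := hub j (wordDist S z x) hj le_rfl
    have hf0 : z * (l.take 0).prod = (z : H) := by simp
    have hfn : z * (l.take (wordDist S z x)).prod = x := by
      rw [← hlen', List.take_length, hlp, mul_inv_cancel_left]
    rw [hf0] at h2
    rw [hfn] at h3
    have t1 := wordDist_triangle hSsym hSgen z (z * (l.take i).prod) x
    have t2 := wordDist_triangle hSsym hSgen (z * (l.take i).prod) (z * (l.take j).prod) x
    omega

end Aux4

section Aux5
variable {H : Type*} [Group H] {S : Set H}
variable (hSsym : ∀ s ∈ S, s⁻¹ ∈ S) (hSgen : Subgroup.closure S = ⊤)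
include hSsym hSgen

lemma fourPoint {δ : ℝ} (hδ : 0 ≤ δ) (hhyp : WordHyperbolic S δ) (w x y z : H) :
    min (gromovProd S x y w) (gromovProd S y z w) - (δ + 1) ≤ gromovProd S x z w := by
  set t := min (gromovProd S x y w) (gromovProd S y z w) with ht
  rcases le_or_gt t (δ + 1) with hcase | hcase
  · have := gromovProd_nonneg hSsym hSgen x z w
    linarith
  · have ht0 : 0 ≤ t := by linarith
    set i := ⌊t⌋₊ with hi
    have hit : (i : ℝ) ≤ t := Nat.floor_le ht0
    have hti : t - 1 ≤ (i : ℝ) := le_of_lt (Nat.sub_one_lt_floor t)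
    have htxy : t ≤ gromovProd S x y w := min_le_left _ _
    have htyz : t ≤ gromovProd S y z w := min_le_right _ _
    obtain ⟨f, hf0, hfn, hfg⟩ := exists_geodesic hSsym hSgen w x
    obtain ⟨g, hg0, hgn, hgg⟩ := exists_geodesic hSsym hSgen w y
    obtain ⟨e, he0, hen, heg⟩ := exists_geodesic hSsym hSgen w z
    have hgpx : gromovProd S x y w ≤ (wordDist S w x : ℝ) := by
      have := gromovProd_le hSsym hSgen x y w
      rwa [wordDist_symm hSsym hSgen x w] at this
    have hgpy : gromovProd S x y w ≤ (wordDist S w y : ℝ) := by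
      have := gromovProd_le hSsym hSgen y x w
      rw [gromovProd_symm hSsym hSgen x y w]
      rwa [wordDist_symm hSsym hSgen y w] at this
    have hgpy' : gromovProd S y z w ≤ (wordDist S w y : ℝ) := by
      have := gromovProd_le hSsym hSgen y z w
      rwa [wordDist_symm hSsym hSgen y w] at this
    have hgpz : gromovProd S y z w ≤ (wordDist S w z : ℝ) := by
      have := gromovProd_le hSsym hSgen z y w
      rw [gromovProd_symm hSsym hSgen y z w]
      rwa [wordDist_symm hSsym hSgen z w] at this
    have hix : i ≤ wordDist S w x := by exact_mod_cast hit.trans (htxy.trans hgpx)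
    have hiy : i ≤ wordDist S w y := by exact_mod_cast hit.trans (htxy.trans hgpy)
    have hiz : i ≤ wordDist S w z := by exact_mod_cast hit.trans (htyz.trans hgpz)
    have h1 : (wordDist S (f i) (g i) : ℝ) ≤ δ :=
      hhyp x y w f g hf0 hfn hfg hg0 hgn hgg i hix hiy (hit.trans htxy)
    have h2 : (wordDist S (g i) (e i) : ℝ) ≤ δ :=
      hhyp y z w g e hg0 hgn hgg he0 hen heg i hiy hiz (hit.trans htyz)
    have hfx : wordDist S (f i) x = wordDist S w x - i := by
      have := hfg i (wordDist S w x) hix le_rfl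
      rwa [hfn] at this
    have hez : wordDist S (e i) z = wordDist S w z - i := by
      have := heg i (wordDist S w z) hiz le_rfl
      rwa [hen] at this
    have t1 : wordDist S x z ≤
        wordDist S x (f i) + wordDist S (f i) (e i) + wordDist S (e i) z := by
      have := wordDist_triangle hSsym hSgen x (f i) z
      have h3 := wordDist_triangle hSsym hSgen (f i) (e i) z
      omega
    have t2 : wordDist S (f i) (e i) ≤ wordDist S (f i) (g i) + wordDist S (g i) (e i) :=
      wordDist_triangle hSsym hSgen (f i) (g i) (e i)
    have hxz : (wordDist S x z : ℝ) ≤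
        ((wordDist S w x : ℝ) - i) + 2 * δ + ((wordDist S w z : ℝ) - i) := by
      have e1 : (wordDist S x (f i) : ℝ) = (wordDist S w x : ℝ) - i := by
        rw [wordDist_symm hSsym hSgen x (f i), hfx]
        rw [Nat.cast_sub hix]
      have e2 : (wordDist S (e i) z : ℝ) = (wordDist S w z : ℝ) - i := by
        rw [hez, Nat.cast_sub hiz]
      have t2' : (wordDist S (f i) (e i) : ℝ) ≤ (wordDist S (f i) (g i) : ℝ) +
          (wordDist S (g i) (e i) : ℝ) := by exact_mod_cast t2
      have t1'' : (wordDist S x z : ℝ) ≤ (wordDist S x (f i) : ℝ) +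
          (wordDist S (f i) (e i) : ℝ) + (wordDist S (e i) z : ℝ) := by exact_mod_cast t1
      linarith
    have hxw : (wordDist S x w : ℝ) = (wordDist S w x : ℝ) := by
      rw [wordDist_symm hSsym hSgen x w]
    have hzw : (wordDist S z w : ℝ) = (wordDist S w z : ℝ) := by
      rw [wordDist_symm hSsym hSgen z w]
    unfold gromovProd
    rw [hxw, hzw]
    linarith
end Aux5

section Aux6
variable {H : Type*} [Group H] {S : Set H}
variable (hSsym : ∀ s ∈ S, s⁻¹ ∈ S) (hSgen : Subgroup.closure S = ⊤)
include hSsym hSgen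

lemma wordDist_pow_succ' (h : H) (k : ℕ) :
    wordDist S (h ^ k) (h ^ (k + 1)) = wordLength S h := by
  show wordLength S _ = _
  congr 1
  rw [pow_succ, inv_mul_cancel_left]

lemma wordLength_pow_le (a : H) (k : ℕ) :
    wordLength S (a ^ k) ≤ k * wordLength S a := by
  induction k with
  | zero => simp [wordLength_one' hSsym hSgen]
  | succ k ih =>
    rw [pow_succ]
    calc wordLength S (a ^ k * a) ≤ wordLength S (a ^ k) + wordLength S a :=
          wordLength_mul_le hSsym hSgen _ _
      _ ≤ k * wordLength S a + wordLength S a := by omega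
      _ = (k + 1) * wordLength S a := by ring

end Aux6

theorem stmt8' {H : Type*} [Group H] (S : Set H) (δ : ℝ)
    (hSfin : S.Finite) (hSsym : ∀ s ∈ S, s⁻¹ ∈ S) (hSgen : Subgroup.closure S = ⊤)
    (hδ : 0 ≤ δ) (hhyp : WordHyperbolic S δ) :
    ∀ A : ℝ, 0 ≤ A → ∃ κ : ℝ, 0 ≤ κ ∧
      ∀ h : H, gromovProd S 1 (h * h) h ≤ A → AlmostConjMin S κ h := by
  intro A hA
  refine ⟨2*A + 2*δ + 2, by linarith, ?_⟩
  intro h hgp g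
  set n := wordLength S h with hn
  set m := wordLength S (g⁻¹ * h * g) with hm
  rcases le_or_gt (n : ℝ) (2*A + 2*δ + 2) with hs | hb
  · have hm0 : (0:ℝ) ≤ (m : ℝ) := Nat.cast_nonneg m
    linarith
  · set B : ℝ := A + δ + 1 with hB
    have hloc : ∀ k : ℕ, gromovProd S (h^k) (h^(k+2)) (h^(k+1)) ≤ A := by
      intro k
      have e := gromovProd_left (h^k) 1 (h*h) h (S := S)
      rw [mul_one] at e
      have e2 : h^k * (h*h) = h^(k+2) := by rw [← mul_assoc, ← pow_succ, ← pow_succ]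
      have e3 : h^k * h = h^(k+1) := (pow_succ h k).symm
      rw [e2, e3] at e
      rw [e]; exact hgp
    have hdsucc : ∀ k : ℕ, wordDist S (h^(k+1)) (h^k) = n := by
      intro k
      rw [wordDist_symm hSsym hSgen, wordDist_pow_succ' hSsym hSgen]
    have C1 : ∀ k : ℕ, gromovProd S 1 (h^(k+2)) (h^(k+1)) ≤ B := by
      intro k
      induction k with
      | zero =>
        show gromovProd S 1 (h^2) (h^1) ≤ B
        rw [pow_one, sq]
        rw [hB]
        linarith
      | succ k ih =>
        show gromovProd S 1 (h^(k+3)) (h^(k+2)) ≤ B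
        have hadd := gromovProd_add hSsym hSgen 1 (h^(k+2)) (h^(k+1))
        rw [hdsucc (k+1)] at hadd
        have hrev : (n:ℝ) - B ≤ gromovProd S 1 (h^(k+1)) (h^(k+2)) := by linarith
        have h4 := fourPoint hSsym hSgen hδ hhyp (h^(k+2)) (h^(k+1)) 1 (h^(k+3))
        have hloc' : gromovProd S (h^(k+1)) (h^(k+3)) (h^(k+2)) ≤ A := hloc (k+1)
        have hswap : gromovProd S (h^(k+1)) 1 (h^(k+2)) =
            gromovProd S 1 (h^(k+1)) (h^(k+2)) := gromovProd_symm hSsym hSgen _ _ _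
        rw [hswap] at h4
        have hminle : min (gromovProd S 1 (h^(k+1)) (h^(k+2)))
            (gromovProd S 1 (h^(k+3)) (h^(k+2))) ≤ A + (δ + 1) := by linarith
        rcases min_le_iff.mp hminle with hc | hc
        · exfalso
          have : (n:ℝ) - B ≤ A + (δ+1) := le_trans hrev hc
          rw [hB] at this
          linarith
        · rw [hB]; linarith
    have C2 : ∀ k : ℕ, (k:ℝ) * ((n:ℝ) - 2*B) ≤ (wordLength S (h^k) : ℝ) := by
      intro k
      induction k with
      | zero => simp
      | succ k ih =>
        have hgpk : gromovProd S 1 (h^(k+1)) (h^k) ≤ B := by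
          cases k with
          | zero =>
            have : gromovProd S 1 (h^1) (h^0) = 0 := by
              unfold gromovProd
              rw [pow_zero, pow_one]
              have : wordDist S 1 (1:H) = 0 := by
                show wordLength S _ = 0
                rw [inv_one, one_mul, wordLength_one' hSsym hSgen]
              rw [this]
              rw [wordDist_symm hSsym hSgen h 1, Nat.cast_zero]
              ring
            rw [this, hB]; linarith
          | succ j => exact C1 j
        have hexp : (wordLength S (h^(k+1)) : ℝ) =
            (wordLength S (h^k) : ℝ) + (n:ℝ) - 2 * gromovProd S 1 (h^(k+1)) (h^k) := by
          have : gromovProd S 1 (h^(k+1)) (h^k) =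
              ((wordDist S 1 (h^k) : ℝ) + (wordDist S (h^(k+1)) (h^k) : ℝ)
                - (wordDist S 1 (h^(k+1)) : ℝ)) / 2 := rfl
          rw [this, hdsucc k, wordDist_one_left, wordDist_one_left]
          ring
        have hc : ((k:ℝ) + 1) * ((n:ℝ) - 2*B) ≤ (wordLength S (h^(k+1)) : ℝ) := by
          rw [hexp]; nlinarith [hgpk]
        calc ((k+1 : ℕ):ℝ) * ((n:ℝ) - 2*B) = ((k:ℝ)+1) * ((n:ℝ)-2*B) := by push_cast; ring
          _ ≤ _ := hc
    have U : ∀ k : ℕ, (wordLength S (h^k) : ℝ) ≤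
        2 * (wordLength S g : ℝ) + (k:ℝ) * (m:ℝ) := by
      intro k
      have econj : h^k = g * (g⁻¹ * h * g)^k * g⁻¹ := by
        have e : g⁻¹ * h * g = g⁻¹ * h * (g⁻¹)⁻¹ := by rw [inv_inv]
        rw [e, conj_pow, inv_inv]
        group
      have l1 : wordLength S (h^k) ≤
          wordLength S g + wordLength S ((g⁻¹ * h * g)^k) + wordLength S g⁻¹ := by
        rw [econj]
        calc wordLength S (g * (g⁻¹ * h * g)^k * g⁻¹)
            ≤ wordLength S (g * (g⁻¹ * h * g)^k) + wordLength S g⁻¹ :=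
              wordLength_mul_le hSsym hSgen _ _
          _ ≤ wordLength S g + wordLength S ((g⁻¹ * h * g)^k) + wordLength S g⁻¹ := by
              have := wordLength_mul_le hSsym hSgen g ((g⁻¹ * h * g)^k)
              omega
      have l2 : wordLength S ((g⁻¹ * h * g)^k) ≤ k * m :=
        wordLength_pow_le hSsym hSgen _ _
      have l3 : wordLength S g⁻¹ = wordLength S g := wordLength_inv hSsym hSgen g
      have : wordLength S (h^k) ≤ 2 * wordLength S g + k * m := by omega
      calc (wordLength S (h^k) : ℝ) ≤ ((2 * wordLength S g + k * m : ℕ) : ℝ) := by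
            exact_mod_cast this
        _ = 2 * (wordLength S g : ℝ) + (k:ℝ) * (m:ℝ) := by push_cast; ring
    by_contra hcon
    push_neg at hcon
    have hε : (0:ℝ) < (n:ℝ) - 2*B - (m:ℝ) := by rw [hB]; linarith
    obtain ⟨k, hk⟩ := exists_nat_gt ((2 * (wordLength S g : ℝ)) / ((n:ℝ) - 2*B - (m:ℝ)))
    have hkey : (k:ℝ) * ((n:ℝ) - 2*B - (m:ℝ)) ≤ 2 * (wordLength S g : ℝ) := by
      have c2 := C2 k
      have u := U k
      nlinarith
    have : 2 * (wordLength S g : ℝ) < (k:ℝ) * ((n:ℝ) - 2*B - (m:ℝ)) :=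
      (div_lt_iff₀ hε).mp hk
    linarith


/-- Let `H` be a group with finite symmetric generating set `S` whose
word metric is `δ`-hyperbolic. For any `A ≥ 0` there is `κ ≥ 0`, depending only on `A`,
`H`, `S`, `δ`, such that every `h ∈ H` with `(1,h²)_h ≤ A` is `κ`-almost conjugacy
minimal. -/
theorem stmt8 {H : Type*} [Group H] (S : Set H) (δ : ℝ)
    (hSfin : S.Finite) (hSsym : ∀ s ∈ S, s⁻¹ ∈ S) (hSgen : Subgroup.closure S = ⊤)
    (hδ : 0 ≤ δ) (hhyp : WordHyperbolic S δ) :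
    ∀ A : ℝ, 0 ≤ A → ∃ κ : ℝ, 0 ≤ κ ∧
      ∀ h : H, gromovProd S 1 (h * h) h ≤ A → AlmostConjMin S κ h := by
  exact stmt8' S δ hSfin hSsym hSgen hδ hhyp
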